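/- Let f : ℝⁿ → ℝ be convex with global minimizer x*, x̄ ∈ ℝⁿ with ‖x* - x̄‖ > 2R, and let x₁* minimize f over B(x̄, R) and x₂* minimize f over B(x̄, 2R). Let x̂ be the point where the segment from x₁* to x* crosses the sphere of radius 2R around x̄, and write x̂ = (1 - t)x₁* + t·x* with t = ‖x̂ - x₁*‖/‖x* - x₁*‖. If f(x₁*) - f(x̂) ≤ 2ε, then f(x₁*) - f(x*) ≤ (2 + 2D*/R)·ε, where D* = ‖x̄ - x*‖. -/

import Mathlib

theorem stmt18 {n : ℕ} (f : EuclideanSpace ℝ (Fin n) → ℝ) (hf : ConvexOn ℝ Set.univ f)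
    (xbar xstar x1 x2 xhat : EuclideanSpace ℝ (Fin n)) (R ε t : ℝ)
    (hR : 0 < R) (hε : 0 ≤ ε)
    (hmin : ∀ x, f xstar ≤ f x)
    (hfar : 2 * R < ‖xstar - xbar‖)
    (hx1 : x1 ∈ Metric.closedBall xbar R)
    (hx1min : ∀ x ∈ Metric.closedBall xbar R, f x1 ≤ f x)
    (hx2 : x2 ∈ Metric.closedBall xbar (2 * R))
    (hx2min : ∀ x ∈ Metric.closedBall xbar (2 * R), f x2 ≤ f x)
    (ht : t = ‖xhat - x1‖ / ‖xstar - x1‖) (ht1 : t ≤ 1)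
    (hxhat : xhat = (1 - t) • x1 + t • xstar)
    (hsphere : ‖xhat - xbar‖ = 2 * R)
    (hgap : f x1 - f xhat ≤ 2 * ε) :
    f x1 - f xstar ≤ (2 + 2 * ‖xbar - xstar‖ / R) * ε := by
  set D := ‖xbar - xstar‖ with hD
  have hx1' : ‖x1 - xbar‖ ≤ R := by simpa [dist_eq_norm] using hx1
  have ha : R ≤ ‖xhat - x1‖ := by
    have h1 := norm_sub_norm_le (xhat - xbar) (x1 - xbar)
    have h2 : xhat - xbar - (x1 - xbar) = xhat - x1 := by abel
    rw [h2, hsphere] at h1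
    linarith
  have hDs : ‖xstar - xbar‖ = D := (norm_sub_rev _ _)
  have hb : ‖xstar - x1‖ ≤ D + R := by
    have h1 := norm_add_le (xstar - xbar) (xbar - x1)
    have h2 : xstar - xbar + (xbar - x1) = xstar - x1 := by abel
    have h3 : ‖xbar - x1‖ = ‖x1 - xbar‖ := norm_sub_rev _ _
    rw [h2, hDs, h3] at h1
    linarith
  have hb0 : 0 < ‖xstar - x1‖ := by
    have h1 := norm_sub_norm_le (xstar - xbar) (x1 - xbar)
    have h2 : xstar - xbar - (x1 - xbar) = xstar - x1 := by abel
    rw [h2] at h1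
    linarith
  have ht0 : 0 < t := by
    rw [ht]
    exact div_pos (lt_of_lt_of_le hR ha) hb0
  have htb : t * ‖xstar - x1‖ = ‖xhat - x1‖ := by
    rw [ht]; field_simp
  have hcvx : f xhat ≤ (1 - t) * f x1 + t * f xstar := by
    rw [hxhat]
    exact hf.2 (Set.mem_univ x1) (Set.mem_univ xstar) (by linarith) ht0.le (by ring)
  have htgap : t * (f x1 - f xstar) ≤ 2 * ε := by nlinarith
  have hgap0 : 0 ≤ f x1 - f xstar := by linarith [hmin x1]
  have htR : R ≤ t * (D + R) := by
    have := mul_le_mul_of_nonneg_left hb ht0.le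
    nlinarith
  have hD0 : 0 ≤ D := norm_nonneg _
  have hfin : R * (f x1 - f xstar) ≤ 2 * (D + R) * ε := by
    nlinarith [mul_nonneg (sub_nonneg.2 htR) hgap0,
      mul_le_mul_of_nonneg_left htgap (by linarith : (0:ℝ) ≤ D + R)]
  have heq : (2 + 2 * D / R) * ε = 2 * (D + R) * ε / R := by
    field_simp
    ring
  rw [heq, le_div_iff₀ hR]
  nlinarith
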